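/- Let $(W,S)$ be a Coxeter system and $s_1, \ldots, s_n \in S$. Writing $(1+T_{s_1})\cdots(1+T_{s_n}) = \sum_{x\in W} p^x_n T_x$ in the Hecke algebra over $\mathbb{Z}[q,q^{-1}]$, every $p^x_n$ is a polynomial in $q$ with non-negative integer coefficients. -/

import Mathlib

open LaurentPolynomial

/-- Laurent polynomials that come from polynomials with nonnegative coefficients. -/
def NNLaurent (f : LaurentPolynomial ℤ) : Prop :=
  ∃ P : Polynomial ℤ, (∀ k, 0 ≤ P.coeff k) ∧ f = Polynomial.toLaurent P

lemma NNLaurent.zero : NNLaurent 0 :=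
  ⟨0, fun k => by simp, by simp⟩

lemma NNLaurent.one : NNLaurent 1 :=
  ⟨1, fun k => by
    rw [Polynomial.coeff_one]; split <;> norm_num, by simp⟩

lemma NNLaurent.q : NNLaurent (LaurentPolynomial.T 1) :=
  ⟨Polynomial.X, fun k => by
    rw [Polynomial.coeff_X]; split <;> norm_num, by simp⟩

lemma NNLaurent.add {f g : LaurentPolynomial ℤ} (hf : NNLaurent f) (hg : NNLaurent g) :
    NNLaurent (f + g) := by
  obtain ⟨P, hP, rfl⟩ := hf
  obtain ⟨Q, hQ, rfl⟩ := hg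
  exact ⟨P + Q, fun k => by simpa using add_nonneg (hP k) (hQ k), by simp⟩

lemma NNLaurent.mul {f g : LaurentPolynomial ℤ} (hf : NNLaurent f) (hg : NNLaurent g) :
    NNLaurent (f * g) := by
  obtain ⟨P, hP, rfl⟩ := hf
  obtain ⟨Q, hQ, rfl⟩ := hg
  refine ⟨P * Q, fun k => ?_, by simp⟩
  rw [Polynomial.coeff_mul]
  exact Finset.sum_nonneg fun p _ => mul_nonneg (hP p.1) (hQ p.2)

lemma NNLaurent.sum {α : Type*} (s : Finset α) (f : α → LaurentPolynomial ℤ)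
    (h : ∀ a ∈ s, NNLaurent (f a)) : NNLaurent (∑ a ∈ s, f a) :=
  Finset.sum_induction f NNLaurent (fun _ _ => NNLaurent.add) NNLaurent.zero h

/-- Writing `(1+T_{s_1})⋯(1+T_{s_n}) = ∑ₓ pⁿₓ Tₓ` in the Hecke
algebra over `ℤ[q,q⁻¹]`, every coefficient `pⁿₓ` is a polynomial in `q` with
non-negative integer coefficients. -/
theorem stmt13
    (B W : Type) [Group W] (M : CoxeterMatrix B) (cs : CoxeterSystem M W)
    (H : Type) [Ring H] [Algebra (LaurentPolynomial ℤ) H]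
    (q : LaurentPolynomial ℤ) (hq : q = LaurentPolynomial.T 1)
    (T : Module.Basis W (LaurentPolynomial ℤ) H)
    (hT1 : T 1 = 1)
    (hmul_lt : ∀ (i : B) (w : W), cs.length w < cs.length (cs.simple i * w) →
      T (cs.simple i) * T w = T (cs.simple i * w))
    (hmul_gt : ∀ (i : B) (w : W), cs.length (cs.simple i * w) < cs.length w →
      T (cs.simple i) * T w = q • T (cs.simple i * w) + (q - 1) • T w)
    (n : ℕ) (s : Fin n → B) (x : W) :
    ∃ P : Polynomial ℤ, (∀ k, 0 ≤ P.coeff k) ∧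
      T.repr (((List.ofFn s).map (fun i => 1 + T (cs.simple i))).prod) x
        = Polynomial.toLaurent P := by
  have hqNN : NNLaurent q := hq ▸ NNLaurent.q
  -- key step lemma
  have key : ∀ (i : B) (h : H), (∀ y, NNLaurent (T.repr h y)) →
      ∀ y, NNLaurent (T.repr ((1 + T (cs.simple i)) * h) y) := by
    intro i h hh y
    have hrep : h = ((T.repr h).sum fun w c => c • T w) := by
      conv_lhs => rw [← T.linearCombination_repr h]
      rw [Finsupp.linearCombination_apply]
    rw [hrep]
    rw [Finsupp.sum, Finset.mul_sum, map_sum, Finsupp.finset_sum_apply]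
    apply NNLaurent.sum
    intro w _
    have single : ∀ (u : W), NNLaurent (T.repr ((T.repr h) w • T u) y) := by
      intro u
      rw [map_smul, Finsupp.smul_apply, T.repr_self, smul_eq_mul]
      rcases eq_or_ne u y with rfl | hne
      · simpa using (hh w).mul NNLaurent.one
      · simp [Finsupp.single_apply_eq_zero.2 (fun hxy => (hne hxy.symm).elim), NNLaurent.zero]
    have expand : (1 + T (cs.simple i)) * ((T.repr h) w • T w)
        = (T.repr h) w • T w + (T.repr h) w • (T (cs.simple i) * T w) := by
      rw [add_mul, one_mul, mul_smul_comm]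
    rw [expand]
    rcases cs.length_simple_mul w i with hlen | hlen
    · rw [hmul_lt i w (by omega), map_add, Finsupp.add_apply]
      exact (single w).add (single (cs.simple i * w))
    · rw [hmul_gt i w (by omega)]
      have : (T.repr h) w • T w + (T.repr h) w • (q • T (cs.simple i * w) + (q - 1) • T w)
          = ((T.repr h) w * q) • T (cs.simple i * w) + ((T.repr h) w * q) • T w := by
        module
      rw [this, map_add, Finsupp.add_apply]
      have h2 : ∀ u, NNLaurent (T.repr (((T.repr h) w * q) • T u) y) := by
        intro u
        rw [map_smul, Finsupp.smul_apply, T.repr_self, smul_eq_mul]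
        rcases eq_or_ne u y with rfl | hne
        · simpa using ((hh w).mul hqNN).mul NNLaurent.one
        · simp [Finsupp.single_apply_eq_zero.2 (fun hxy => (hne hxy.symm).elim), NNLaurent.zero]
      exact (h2 (cs.simple i * w)).add (h2 w)
  -- induction on n
  suffices h : ∀ y, NNLaurent
      (T.repr (((List.ofFn s).map (fun i => 1 + T (cs.simple i))).prod) y) by
    obtain ⟨P, hP, hE⟩ := h x
    exact ⟨P, hP, hE⟩
  induction n with
  | zero =>
      intro y
      simp only [List.ofFn_zero, List.map_nil, List.prod_nil]
      rw [← hT1, T.repr_self]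
      rcases eq_or_ne (1 : W) y with rfl | hne
      · simpa using NNLaurent.one
      · simp [Finsupp.single_apply_eq_zero.2 (fun hxy => (hne hxy.symm).elim), NNLaurent.zero]
  | succ m ih =>
      intro y
      rw [List.ofFn_succ, List.map_cons, List.prod_cons]
      exact key (s 0) _ (ih (fun j => s j.succ)) y
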